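/- Let p > 0 and let F := {(x, 2^{-1/x}·sin(π·x^{-1/p})) : x ∈ (0,1]} ⊆ ℝ², the topologist's sine curve attenuated by the envelope g(x) = 2^{-1/x}. Then for every θ ∈ (0,1], lodim_θ(F) = updim_θ(F) = 1. -/

import Mathlib

open Set Metric Filter

/-- The upper θ-intermediate dimension of a set `E` in a metric space:
the infimum of all `s ≥ 0` such that for every `ε > 0` there is `δ₀ > 0` such that for all
`0 < δ < δ₀` there is a countable cover `𝒰` of `E` with `δ ≤ diam U ≤ δ ^ θ` for all `U ∈ 𝒰`
and `∑_{U ∈ 𝒰} (diam U) ^ s ≤ ε`. -/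
noncomputable def updim {X : Type*} [PseudoMetricSpace X] (θ : ℝ) (E : Set X) : ℝ :=
  sInf {s : ℝ | 0 ≤ s ∧ ∀ ε : ℝ, 0 < ε → ∃ δ₀ : ℝ, 0 < δ₀ ∧ ∀ δ : ℝ, 0 < δ → δ < δ₀ →
    ∃ 𝒰 : Set (Set X), 𝒰.Countable ∧ E ⊆ ⋃₀ 𝒰 ∧
      (∀ U ∈ 𝒰, δ ≤ diam U ∧ diam U ≤ δ ^ θ) ∧
      ∑' U : 𝒰, ENNReal.ofReal (diam (U : Set X) ^ s) ≤ ENNReal.ofReal ε}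

/-- The lower θ-intermediate dimension of a set `E` in a metric space. -/
noncomputable def lodim {X : Type*} [PseudoMetricSpace X] (θ : ℝ) (E : Set X) : ℝ :=
  sInf {s : ℝ | 0 ≤ s ∧ ∀ ε : ℝ, 0 < ε → ∀ δ₀ : ℝ, 0 < δ₀ → ∃ δ : ℝ, 0 < δ ∧ δ < δ₀ ∧
    ∃ 𝒰 : Set (Set X), 𝒰.Countable ∧ E ⊆ ⋃₀ 𝒰 ∧
      (∀ U ∈ 𝒰, δ ≤ diam U ∧ diam U ≤ δ ^ θ) ∧
      ∑' U : 𝒰, ENNReal.ofReal (diam (U : Set X) ^ s) ≤ ENNReal.ofReal ε}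

/-- The topologist's sine curve attenuated by the envelope `g(x) = 2^{-1/x}`:
`F = {(x, 2^{-1/x} sin(π x^{-1/p})) : x ∈ (0,1]} ⊆ ℝ²`. -/
noncomputable def expAttenSine (p : ℝ) : Set (EuclideanSpace ℝ (Fin 2)) :=
  {x | ∃ t : ℝ, 0 < t ∧ t ≤ 1 ∧ x 0 = t ∧
    x 1 = (2 : ℝ) ^ (-(1 / t)) * Real.sin (Real.pi * t ^ (-(1 / p)))}

noncomputable def fA (p t : ℝ) : ℝ := (2 : ℝ) ^ (-(1 / t)) * Real.sin (Real.pi * t ^ (-(1 / p)))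

lemma fA_eq (p t : ℝ) : fA p t = Real.exp (Real.log 2 * (-(1/t))) * Real.sin (Real.pi * t ^ (-(1/p))) := by
  rw [fA, Real.rpow_def_of_pos two_pos]

-- envelope bound
lemma env_le (n : ℕ) {t : ℝ} (ht : 0 < t) :
    Real.exp (Real.log 2 * (-(1/t))) ≤ n.factorial * t ^ n / (Real.log 2) ^ n := by
  have hl2 : (0:ℝ) < Real.log 2 := Real.log_pos one_lt_two
  have hx : (0:ℝ) < Real.log 2 / t := div_pos hl2 ht
  have h1 : (Real.log 2 / t) ^ n / n.factorial ≤ Real.exp (Real.log 2 / t) :=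
    Real.pow_div_factorial_le_exp _ hx.le n
  have h2 : Real.exp (Real.log 2 * (-(1/t))) = (Real.exp (Real.log 2 / t))⁻¹ := by
    rw [← Real.exp_neg]; ring_nf
  rw [h2]
  have hpow : (0:ℝ) < (Real.log 2 / t) ^ n / n.factorial :=
    div_pos (pow_pos hx n) (by positivity)
  have h3 : (Real.exp (Real.log 2 / t))⁻¹ ≤ ((Real.log 2 / t) ^ n / n.factorial)⁻¹ :=
    inv_anti₀ hpow h1
  refine h3.trans_eq ?_
  field_simp [div_pow]
  rw [div_pow, div_mul_cancel₀ _ (pow_ne_zero _ ht.ne')]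

lemma fA_hasDeriv (p : ℝ) {t : ℝ} (ht : 0 < t) :
    HasDerivAt (fA p)
      (Real.exp (Real.log 2 * (-(1/t))) * (Real.log 2 * (t^2)⁻¹) * Real.sin (Real.pi * t ^ (-(1/p)))
        + Real.exp (Real.log 2 * (-(1/t))) *
          (Real.cos (Real.pi * t ^ (-(1/p))) * (Real.pi * ((-(1/p)) * t ^ ((-(1/p)) - 1))))) t := by
  have hfe : fA p = fun t => Real.exp (Real.log 2 * (-(1/t))) * Real.sin (Real.pi * t ^ (-(1/p))) :=
    funext fun t => fA_eq p t
  rw [hfe]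
  have h0 : HasDerivAt (fun t : ℝ => -(1/t)) ((t^2)⁻¹) t := by
    have h := (hasDerivAt_inv ht.ne').neg
    simp only [neg_neg] at h
    simp only [one_div]
    exact h
  have h1 : HasDerivAt (fun t : ℝ => Real.exp (Real.log 2 * (-(1/t))))
      (Real.exp (Real.log 2 * (-(1/t))) * (Real.log 2 * (t^2)⁻¹)) t := by
    exact (h0.const_mul (Real.log 2)).exp
  have h2 : HasDerivAt (fun t : ℝ => t ^ (-(1/p))) ((-(1/p)) * t ^ ((-(1/p)) - 1)) t :=
    Real.hasDerivAt_rpow_const (Or.inl ht.ne')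
  have h3 : HasDerivAt (fun t : ℝ => Real.sin (Real.pi * t ^ (-(1/p))))
      (Real.cos (Real.pi * t ^ (-(1/p))) * (Real.pi * ((-(1/p)) * t ^ ((-(1/p)) - 1)))) t :=
    (h2.const_mul Real.pi).sin
  exact h1.mul h3

lemma fA_lip (p : ℝ) (hp : 0 < p) : ∃ M : ℝ, 0 ≤ M ∧
    ∀ t ∈ Set.Ioc (0:ℝ) 1, ∀ u ∈ Set.Ioc (0:ℝ) 1, |fA p t - fA p u| ≤ M * |t - u| := by
  classical
  have hl2 : (0:ℝ) < Real.log 2 := Real.log_pos one_lt_two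
  set n : ℕ := ⌈1/p⌉₊ + 1 with hn
  set C1 : ℝ := (Nat.factorial 2) / (Real.log 2) ^ 2 * Real.log 2 with hC1
  set C2 : ℝ := Real.pi * (1/p) * (Nat.factorial n / (Real.log 2) ^ n) with hC2
  refine ⟨C1 + C2, by positivity, ?_⟩
  have key : ∀ x ∈ Set.Ioc (0:ℝ) 1, ∀ y ∈ Set.Ioc (0:ℝ) 1,
      ‖fA p y - fA p x‖ ≤ (C1 + C2) * ‖y - x‖ := by
    refine fun x hx y hy => Convex.norm_image_sub_le_of_norm_hasDerivWithin_le
      (f' := fun t => Real.exp (Real.log 2 * (-(1/t))) * (Real.log 2 * (t^2)⁻¹) * Real.sin (Real.pi * t ^ (-(1/p)))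
        + Real.exp (Real.log 2 * (-(1/t))) *
          (Real.cos (Real.pi * t ^ (-(1/p))) * (Real.pi * ((-(1/p)) * t ^ ((-(1/p)) - 1)))))
      (fun t htt => (fA_hasDeriv p htt.1).hasDerivWithinAt) ?_ (convex_Ioc _ _) hx hy
    intro t htt
    obtain ⟨ht, ht1⟩ := htt
    have hE : (0:ℝ) < Real.exp (Real.log 2 * (-(1/t))) := Real.exp_pos _
    have hsin : |Real.sin (Real.pi * t ^ (-(1/p)))| ≤ 1 := Real.abs_sin_le_one _
    have hcos : |Real.cos (Real.pi * t ^ (-(1/p)))| ≤ 1 := Real.abs_cos_le_one _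
    -- first summand bound
    have hb1 : |Real.exp (Real.log 2 * (-(1/t))) * (Real.log 2 * (t^2)⁻¹) *
        Real.sin (Real.pi * t ^ (-(1/p)))| ≤ C1 := by
      have henv := env_le 2 ht
      have ht2 : (0:ℝ) < t^2 := by positivity
      have : Real.exp (Real.log 2 * (-(1/t))) * (t^2)⁻¹ ≤ (Nat.factorial 2) / (Real.log 2)^2 := by
        have h' : Real.exp (Real.log 2 * (-(1/t))) * (t^2)⁻¹ ≤
            (Nat.factorial 2 * t ^ 2 / (Real.log 2) ^ 2) * (t^2)⁻¹ :=
          mul_le_mul_of_nonneg_right henv (by positivity)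
        refine h'.trans_eq ?_
        field_simp
      rw [abs_mul, abs_mul]
      calc |Real.exp (Real.log 2 * (-(1/t)))| * |Real.log 2 * (t^2)⁻¹| *
            |Real.sin (Real.pi * t ^ (-(1/p)))|
          ≤ |Real.exp (Real.log 2 * (-(1/t)))| * |Real.log 2 * (t^2)⁻¹| * 1 := by
            apply mul_le_mul_of_nonneg_left hsin (by positivity)
        _ = Real.exp (Real.log 2 * (-(1/t))) * (t^2)⁻¹ * Real.log 2 := by
            rw [abs_of_pos hE, abs_mul, abs_of_pos hl2, abs_of_pos (by positivity : (0:ℝ) < (t^2)⁻¹)]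
            ring
        _ ≤ (Nat.factorial 2) / (Real.log 2)^2 * Real.log 2 :=
            mul_le_mul_of_nonneg_right this hl2.le
        _ = C1 := rfl
    have hb2 : |Real.exp (Real.log 2 * (-(1/t))) *
        (Real.cos (Real.pi * t ^ (-(1/p))) * (Real.pi * ((-(1/p)) * t ^ ((-(1/p)) - 1))))| ≤ C2 := by
      have henv := env_le n ht
      have htr : (0:ℝ) < t ^ ((-(1/p)) - 1) := Real.rpow_pos_of_pos ht _
      have hexp : (0:ℝ) ≤ (n:ℝ) + ((-(1/p)) - 1) := by
        have := Nat.le_ceil (1/p)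
        have : (1/p : ℝ) ≤ ⌈1/p⌉₊ := this
        push_cast [hn]
        linarith
      have hprod : Real.exp (Real.log 2 * (-(1/t))) * t ^ ((-(1/p)) - 1) ≤
          n.factorial / (Real.log 2) ^ n := by
        calc Real.exp (Real.log 2 * (-(1/t))) * t ^ ((-(1/p)) - 1)
            ≤ (n.factorial * t ^ n / (Real.log 2) ^ n) * t ^ ((-(1/p)) - 1) :=
              mul_le_mul_of_nonneg_right henv htr.le
          _ = (n.factorial / (Real.log 2) ^ n) * (t ^ (n:ℝ) * t ^ ((-(1/p)) - 1)) := by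
              rw [Real.rpow_natCast]; ring
          _ = (n.factorial / (Real.log 2) ^ n) * t ^ ((n:ℝ) + ((-(1/p)) - 1)) := by
              rw [← Real.rpow_add ht]
          _ ≤ (n.factorial / (Real.log 2) ^ n) * 1 := by
              gcongr
              exact Real.rpow_le_one ht.le ht1 hexp
          _ = n.factorial / (Real.log 2) ^ n := mul_one _
      rw [abs_mul, abs_mul, abs_mul, abs_mul]
      rw [abs_of_pos hE, abs_of_pos Real.pi_pos, abs_of_pos htr, abs_neg, abs_of_pos (by positivity : (0:ℝ) < 1/p)]
      calc Real.exp (Real.log 2 * (-(1/t))) * (|Real.cos (Real.pi * t ^ (-(1/p)))| *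
            (Real.pi * (1/p * t ^ ((-(1/p)) - 1))))
          ≤ Real.exp (Real.log 2 * (-(1/t))) * (1 * (Real.pi * (1/p * t ^ ((-(1/p)) - 1)))) := by
            gcongr
        _ = Real.pi * (1/p) * (Real.exp (Real.log 2 * (-(1/t))) * t ^ ((-(1/p)) - 1)) := by ring
        _ ≤ Real.pi * (1/p) * (n.factorial / (Real.log 2) ^ n) := by
            gcongr
        _ = C2 := rfl
    rw [Real.norm_eq_abs]
    calc |_ + _| ≤ _ + _ := abs_add_le _ _
      _ ≤ C1 + C2 := add_le_add hb1 hb2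
  intro t htt u huu
  simpa [Real.norm_eq_abs] using key u huu t htt

noncomputable def pt (a b : ℝ) : EuclideanSpace ℝ (Fin 2) := (WithLp.equiv 2 (Fin 2 → ℝ)).symm ![a, b]

@[simp] lemma pt0 (a b : ℝ) : pt a b 0 = a := rfl
@[simp] lemma pt1 (a b : ℝ) : pt a b 1 = b := rfl

lemma dist_eq_two (x y : EuclideanSpace ℝ (Fin 2)) :
    dist x y = Real.sqrt (dist (x 0) (y 0) ^ 2 + dist (x 1) (y 1) ^ 2) := by
  rw [EuclideanSpace.dist_eq, Fin.sum_univ_two]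

def box (a b w h : ℝ) : Set (EuclideanSpace ℝ (Fin 2)) :=
  {x | x 0 ∈ Set.Icc a (a + w) ∧ x 1 ∈ Set.Icc b (b + h)}

lemma box_dist_le {a b w h : ℝ} (hw : 0 ≤ w) (hh : 0 ≤ h) :
    ∀ x ∈ box a b w h, ∀ y ∈ box a b w h, dist x y ≤ Real.sqrt (w ^ 2 + h ^ 2) := by
  intro x hx y hy
  rw [dist_eq_two]
  apply Real.sqrt_le_sqrt
  have h0 : dist (x 0) (y 0) ≤ w := by
    simpa using Real.dist_le_of_mem_Icc hx.1 hy.1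
  have h1 : dist (x 1) (y 1) ≤ h := by
    simpa using Real.dist_le_of_mem_Icc hx.2 hy.2
  have := pow_le_pow_left₀ dist_nonneg h0 2
  have := pow_le_pow_left₀ dist_nonneg h1 2
  linarith

lemma corner_mem {a b w h : ℝ} (hw : 0 ≤ w) (hh : 0 ≤ h) : pt a b ∈ box a b w h :=
  ⟨by simp [hw], by simp [hh]⟩

lemma corner_mem' {a b w h : ℝ} (hw : 0 ≤ w) (hh : 0 ≤ h) : pt (a + w) (b + h) ∈ box a b w h :=
  ⟨by simp [hw], by simp [hh]⟩

lemma diam_box {a b w h : ℝ} (hw : 0 ≤ w) (hh : 0 ≤ h) :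
    diam (box a b w h) = Real.sqrt (w ^ 2 + h ^ 2) := by
  have hb : Bornology.IsBounded (box a b w h) :=
    Metric.isBounded_iff.2 ⟨Real.sqrt (w ^ 2 + h ^ 2), fun x hx y hy => box_dist_le hw hh x hx y hy⟩
  refine le_antisymm (diam_le_of_forall_dist_le (Real.sqrt_nonneg _) (box_dist_le hw hh)) ?_
  have hd : dist (pt a b) (pt (a + w) (b + h)) = Real.sqrt (w ^ 2 + h ^ 2) := by
    rw [dist_eq_two, pt0, pt0, pt1, pt1]
    have e0 : dist a (a + w) = w := by
      rw [Real.dist_eq, abs_sub_comm]; simp [abs_of_nonneg hw]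
    have e1 : dist b (b + h) = h := by
      rw [Real.dist_eq, abs_sub_comm]; simp [abs_of_nonneg hh]
    rw [e0, e1]
  rw [← hd]
  exact dist_le_diam_of_mem hb (corner_mem hw hh) (corner_mem' hw hh)

lemma proj_lip : LipschitzWith 1 (fun x : EuclideanSpace ℝ (Fin 2) => x 0) := by
  refine LipschitzWith.of_dist_le_mul fun x y => ?_
  rw [NNReal.coe_one, one_mul, dist_eq_two]
  have h1 : dist (x 0) (y 0) = Real.sqrt (dist (x 0) (y 0) ^ 2) :=
    (Real.sqrt_sq dist_nonneg).symm
  rw [h1]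
  apply Real.sqrt_le_sqrt
  nlinarith [sq_nonneg (dist (x 1) (y 1)), Real.sqrt_nonneg (dist (x 0) (y 0) ^ 2)]

lemma graph_mem (p : ℝ) {t : ℝ} (ht : 0 < t) (ht1 : t ≤ 1) : pt t (fA p t) ∈ expAttenSine p :=
  ⟨t, ht, ht1, rfl, rfl⟩

lemma mem_graph {p : ℝ} {x : EuclideanSpace ℝ (Fin 2)} (hx : x ∈ expAttenSine p) :
    ∃ t : ℝ, 0 < t ∧ t ≤ 1 ∧ x 0 = t ∧ x 1 = fA p t := hx

lemma cover_prop (p : ℝ) (hp : 0 < p) {θ : ℝ} (hθ : 0 < θ) (hθ' : θ ≤ 1) {s : ℝ} (hs : 1 < s) :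
    ∀ ε : ℝ, 0 < ε → ∃ δ₀ : ℝ, 0 < δ₀ ∧ ∀ δ : ℝ, 0 < δ → δ < δ₀ →
    ∃ 𝒰 : Set (Set (EuclideanSpace ℝ (Fin 2))), 𝒰.Countable ∧ expAttenSine p ⊆ ⋃₀ 𝒰 ∧
      (∀ U ∈ 𝒰, δ ≤ diam U ∧ diam U ≤ δ ^ θ) ∧
      ∑' U : 𝒰, ENNReal.ofReal (diam (U : Set (EuclideanSpace ℝ (Fin 2))) ^ s)
        ≤ ENNReal.ofReal ε := by
  obtain ⟨M, hM0, hlip⟩ := fA_lip p hp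
  set c : ℝ := Real.sqrt (1 + 4 * M ^ 2) with hc
  have hc0 : 0 < c := Real.sqrt_pos.2 (by positivity)
  have hc1 : 1 ≤ c := by
    nlinarith [Real.sq_sqrt (show (0:ℝ) ≤ 1 + 4 * M ^ 2 by positivity), Real.sqrt_nonneg (1 + 4 * M ^ 2)]
  intro ε hε
  have hεc : 0 < ε / (c + 1) := by positivity
  refine ⟨min 1 ((ε / (c + 1)) ^ (s - 1)⁻¹), lt_min one_pos (Real.rpow_pos_of_pos hεc _), ?_⟩
  intro δ hδ hδ'
  have hδ1 : δ < 1 := lt_of_lt_of_le hδ' (min_le_left _ _)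
  have hlt : δ ^ (s - 1) < ε / (c + 1) := by
    have h1 : δ < (ε / (c + 1)) ^ (s - 1)⁻¹ := lt_of_lt_of_le hδ' (min_le_right _ _)
    have h2 := Real.rpow_lt_rpow hδ.le h1 (by linarith : (0:ℝ) < s - 1)
    rwa [← Real.rpow_mul hεc.le, inv_mul_cancel₀ (by linarith : s - 1 ≠ 0), Real.rpow_one] at h2
  set w : ℝ := δ / c with hwdef
  have hw : 0 < w := by positivity
  set K : ℕ := ⌊1 / w⌋₊ + 1 with hK
  set bx : ℕ → Set (EuclideanSpace ℝ (Fin 2)) := fun k =>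
    box (k * w) (fA p (min (k * w + w) 1) - M * w) w (2 * (M * w)) with hbx
  have hdiam : ∀ k : ℕ, diam (bx k) = δ := by
    intro k
    rw [hbx, diam_box hw.le (by positivity)]
    rw [show w ^ 2 + (2 * (M * w)) ^ 2 = w ^ 2 * (1 + 4 * M ^ 2) by ring,
      Real.sqrt_mul (by positivity), Real.sqrt_sq hw.le, ← hc, hwdef]
    field_simp
  refine ⟨bx '' ↑(Finset.range K), ((Finset.range K).finite_toSet.image _).countable, ?_, ?_, ?_⟩
  · -- cover
    rintro x hx
    obtain ⟨t, ht0, ht1, hx0, hx1⟩ := mem_graph hx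
    set k : ℕ := ⌊t / w⌋₊ with hk
    have hkK : k < K := by
      have h1 : t / w ≤ 1 / w := by gcongr
      have := Nat.floor_le_floor h1
      omega
    have hkw : (k : ℝ) * w ≤ t := by
      have h1 : (k : ℝ) ≤ t / w := Nat.floor_le (by positivity)
      calc (k : ℝ) * w ≤ (t / w) * w := by gcongr
        _ = t := by field_simp
    have htkw : t ≤ k * w + w := by
      have h1 : t / w < k + 1 := Nat.lt_floor_add_one _
      have := (div_lt_iff₀ hw).1 h1
      linarith
    refine ⟨bx k, Set.mem_image_of_mem _ (by simpa using hkK), ?_⟩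
    set r : ℝ := min ((k : ℝ) * w + w) 1 with hr
    have hr0 : 0 < r := lt_min (by positivity) one_pos
    have hr1 : r ≤ 1 := min_le_right _ _
    have htr : |t - r| ≤ w := by
      have h1 : t ≤ r := le_min htkw ht1
      have h2 : r ≤ (k : ℝ) * w + w := min_le_left _ _
      rw [abs_sub_comm, abs_of_nonneg (by linarith)]
      linarith
    have hfr : |fA p t - fA p r| ≤ M * w :=
      (hlip t ⟨ht0, ht1⟩ r ⟨hr0, hr1⟩).trans
        (mul_le_mul_of_nonneg_left htr hM0)
    rw [abs_le] at hfr
    exact ⟨by rw [hx0]; exact ⟨hkw, htkw⟩,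
      by rw [hx1]; exact ⟨by linarith [hfr.2], by linarith [hfr.1]⟩⟩
  · -- diam bounds
    rintro U ⟨k, _, rfl⟩
    rw [hdiam k]
    refine ⟨le_refl _, ?_⟩
    calc δ = δ ^ (1:ℝ) := (Real.rpow_one δ).symm
      _ ≤ δ ^ θ := Real.rpow_le_rpow_of_exponent_ge hδ hδ1.le hθ'
  · -- sum bound
    have hinj : Set.InjOn bx ↑(Finset.range K) := by
      intro k _ j _ hkj
      have hmemk : pt ((k : ℝ) * w) (fA p (min ((k : ℝ) * w + w) 1) - M * w) ∈ bx k :=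
        corner_mem hw.le (by positivity)
      have hmemj : pt ((j : ℝ) * w) (fA p (min ((j : ℝ) * w + w) 1) - M * w) ∈ bx j :=
        corner_mem hw.le (by positivity)
    -- from equality of boxes, deduce k = j
      rw [hkj] at hmemk
      rw [← hkj] at hmemj
      have h1 : (j : ℝ) * w ≤ (k : ℝ) * w := by simpa using hmemk.1.1
      have h2 : (k : ℝ) * w ≤ (j : ℝ) * w := by simpa using hmemj.1.1
      have : (k : ℝ) = (j : ℝ) := by
        have := le_antisymm h2 h1
        exact mul_right_cancel₀ hw.ne' this
      exact_mod_cast this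
    rw [tsum_image (fun V => ENNReal.ofReal (diam V ^ s)) hinj]
    have hterm : ∀ x : (↑(Finset.range K) : Set ℕ),
        ENNReal.ofReal (diam (bx x) ^ s) = ENNReal.ofReal (δ ^ s) := by
      intro x; rw [hdiam]
    rw [tsum_congr hterm]
    have hfin := tsum_fintype (L := SummationFilter.unconditional _) (β := (↑(Finset.range K) : Set ℕ)) (fun _ => ENNReal.ofReal (δ ^ s))
    rw [hfin, Finset.sum_const, nsmul_eq_mul]
    have hcard : Fintype.card (↑(Finset.range K) : Set ℕ) = K := by
      simp
    rw [Finset.card_univ, hcard]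
    -- real arithmetic
    have hKle : (K : ℝ) ≤ 1 / w + 1 := by
      rw [hK]
      push_cast
      have := Nat.floor_le (by positivity : (0:ℝ) ≤ 1 / w)
      linarith
    have hreal : (K : ℝ) * δ ^ s ≤ ε := by
      have hδs : δ ^ s = δ ^ (s - 1) * δ := by
        rw [show s = (s - 1) + 1 by ring, Real.rpow_add hδ, Real.rpow_one]
        ring_nf
      set A : ℝ := δ ^ (s - 1) with hA
      have hA0 : 0 ≤ A := Real.rpow_nonneg hδ.le _
      have h1w : 1 / w = c / δ := by rw [hwdef, one_div_div]
      have hcA : (c + 1) * A ≤ ε := by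
        rw [mul_comm]
        exact (le_div_iff₀ (by positivity : (0:ℝ) < c + 1)).1 hlt.le
      calc (K : ℝ) * δ ^ s ≤ (1 / w + 1) * δ ^ s := by
            apply mul_le_mul_of_nonneg_right hKle (Real.rpow_nonneg hδ.le _)
        _ = (c / δ + 1) * (A * δ) := by rw [h1w, hδs]
        _ = c * A + A * δ := by field_simp
        _ ≤ c * A + A * 1 := by nlinarith
        _ = (c + 1) * A := by ring
        _ ≤ ε := hcA
    calc (K : ENNReal) * ENNReal.ofReal (δ ^ s)
        = ENNReal.ofReal ((K : ℝ) * δ ^ s) := by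
          rw [ENNReal.ofReal_mul (by positivity), ENNReal.ofReal_natCast]
      _ ≤ ENNReal.ofReal ε := ENNReal.ofReal_le_ofReal hreal

lemma no_small (p : ℝ) {θ s δ : ℝ} (hθ : 0 < θ) (hs : s ≤ 1) (hδ : 0 < δ) (hδ1 : δ < 1)
    (𝒰 : Set (Set (EuclideanSpace ℝ (Fin 2)))) (hc : 𝒰.Countable)
    (hcov : expAttenSine p ⊆ ⋃₀ 𝒰)
    (hd : ∀ U ∈ 𝒰, δ ≤ diam U ∧ diam U ≤ δ ^ θ) :
    ¬ (∑' U : 𝒰, ENNReal.ofReal (diam (U : Set (EuclideanSpace ℝ (Fin 2))) ^ s)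
        ≤ ENNReal.ofReal (1/2)) := by
  intro hsum
  have key : ∀ U ∈ 𝒰, MeasureTheory.volume ((fun x : EuclideanSpace ℝ (Fin 2) => x 0) '' U)
      ≤ ENNReal.ofReal (diam U ^ s) := by
    intro U hU
    obtain ⟨h1, h2⟩ := hd U hU
    have hdpos : 0 < diam U := lt_of_lt_of_le hδ h1
    have hne : EMetric.diam U ≠ ⊤ := by
      intro h
      have : diam U = 0 := by rw [Metric.diam]; exact (congrArg ENNReal.toReal h : _).trans ENNReal.toReal_top
      linarith
    have hd1 : diam U ≤ 1 := h2.trans (Real.rpow_le_one hδ.le hδ1.le hθ.le)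
    calc MeasureTheory.volume ((fun x : EuclideanSpace ℝ (Fin 2) => x 0) '' U)
        ≤ EMetric.diam ((fun x : EuclideanSpace ℝ (Fin 2) => x 0) '' U) :=
          Real.volume_le_diam _
      _ ≤ (1 : NNReal) * EMetric.diam U := proj_lip.ediam_image_le U
      _ = EMetric.diam U := by rw [ENNReal.coe_one, one_mul]
      _ = ENNReal.ofReal (diam U) := by
          rw [Metric.diam]; exact (ENNReal.ofReal_toReal hne).symm
      _ ≤ ENNReal.ofReal (diam U ^ s) := ENNReal.ofReal_le_ofReal (by
          calc diam U = diam U ^ (1:ℝ) := (Real.rpow_one _).symm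
            _ ≤ diam U ^ s := Real.rpow_le_rpow_of_exponent_ge hdpos hd1 hs)
  have hsub : Set.Ioc (0:ℝ) 1 ⊆ ⋃ U ∈ 𝒰, (fun x : EuclideanSpace ℝ (Fin 2) => x 0) '' U := by
    intro t ht
    obtain ⟨U, hU, hmem⟩ := hcov (graph_mem p ht.1 ht.2)
    exact Set.mem_biUnion hU ⟨_, hmem, rfl⟩
  have h1 : (1 : ENNReal) ≤
      MeasureTheory.volume (⋃ U ∈ 𝒰, (fun x : EuclideanSpace ℝ (Fin 2) => x 0) '' U) := by
    have := MeasureTheory.measure_mono (μ := MeasureTheory.volume) hsub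
    rwa [Real.volume_Ioc, sub_zero, ENNReal.ofReal_one] at this
  have h2 := MeasureTheory.measure_biUnion_le MeasureTheory.volume hc
    (fun U => (fun x : EuclideanSpace ℝ (Fin 2) => x 0) '' U)
  have h3 : (1 : ENNReal) ≤ ∑' U : 𝒰,
      ENNReal.ofReal (diam (U : Set (EuclideanSpace ℝ (Fin 2))) ^ s) :=
    h1.trans (h2.trans (ENNReal.tsum_le_tsum fun U => key U U.2))
  have hcontr := h3.trans hsum
  have : ENNReal.ofReal (1/2) < 1 := by
    rw [ENNReal.ofReal_lt_one]; norm_num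
  exact absurd hcontr (not_le.2 this)

lemma inf_eq_one {S : Set ℝ} (h1 : ∀ s ∈ S, 1 ≤ s) (h2 : ∀ s : ℝ, 1 < s → s ∈ S) :
    sInf S = 1 := by
  have hne : S.Nonempty := ⟨2, h2 2 one_lt_two⟩
  have hbdd : BddBelow S := ⟨1, fun s hs => h1 s hs⟩
  refine le_antisymm ?_ (le_csInf hne h1)
  refine le_of_forall_pos_le_add fun η hη => ?_
  exact csInf_le_of_le hbdd (h2 (1 + η) (by linarith)) le_rfl

theorem stmt19 (p : ℝ) (hp : 0 < p) (θ : ℝ) (hθ : 0 < θ) (hθ' : θ ≤ 1) :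
    lodim θ (expAttenSine p) = 1 ∧ updim θ (expAttenSine p) = 1 := by
  set X := EuclideanSpace ℝ (Fin 2)
  set E := expAttenSine p with hE
  set Sup : Set ℝ := {s : ℝ | 0 ≤ s ∧ ∀ ε : ℝ, 0 < ε → ∃ δ₀ : ℝ, 0 < δ₀ ∧ ∀ δ : ℝ, 0 < δ → δ < δ₀ →
    ∃ 𝒰 : Set (Set X), 𝒰.Countable ∧ E ⊆ ⋃₀ 𝒰 ∧
      (∀ U ∈ 𝒰, δ ≤ diam U ∧ diam U ≤ δ ^ θ) ∧
      ∑' U : 𝒰, ENNReal.ofReal (diam (U : Set X) ^ s) ≤ ENNReal.ofReal ε} with hSup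
  set Slo : Set ℝ := {s : ℝ | 0 ≤ s ∧ ∀ ε : ℝ, 0 < ε → ∀ δ₀ : ℝ, 0 < δ₀ → ∃ δ : ℝ, 0 < δ ∧ δ < δ₀ ∧
    ∃ 𝒰 : Set (Set X), 𝒰.Countable ∧ E ⊆ ⋃₀ 𝒰 ∧
      (∀ U ∈ 𝒰, δ ≤ diam U ∧ diam U ≤ δ ^ θ) ∧
      ∑' U : 𝒰, ENNReal.ofReal (diam (U : Set X) ^ s) ≤ ENNReal.ofReal ε} with hSlo
  have hsub : Sup ⊆ Slo := by
    rintro s ⟨hs0, H⟩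
    refine ⟨hs0, fun ε hε δ₀ hδ₀ => ?_⟩
    obtain ⟨δ₁, hδ₁, Hd⟩ := H ε hε
    refine ⟨min δ₀ δ₁ / 2, by positivity, ?_, ?_⟩
    · calc min δ₀ δ₁ / 2 < min δ₀ δ₁ := by
            have h := lt_min hδ₀ hδ₁; linarith
        _ ≤ δ₀ := min_le_left _ _
    · exact Hd _ (by positivity)
        (lt_of_lt_of_le (by linarith [lt_min hδ₀ hδ₁] : min δ₀ δ₁ / 2 < min δ₀ δ₁) (min_le_right _ _))
  have h2up : ∀ s : ℝ, 1 < s → s ∈ Sup := fun s hs =>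
    ⟨by linarith, cover_prop p hp hθ hθ' hs⟩
  have h1lo : ∀ s ∈ Slo, 1 ≤ s := by
    intro s hs
    by_contra hcon
    push_neg at hcon
    obtain ⟨δ, hδ, hδ1, 𝒰, hc, hcov, hd, hsum⟩ := hs.2 (1/2) (by norm_num) 1 one_pos
    exact no_small p hθ hcon.le hδ hδ1 𝒰 hc hcov hd hsum
  constructor
  · exact inf_eq_one h1lo (fun s hs => hsub (h2up s hs))
  · exact inf_eq_one (fun s hs => h1lo s (hsub hs)) h2up
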